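/- Let R be a commutative local ring of Krull dimension at most 1 whose nilradical is a prime ideal, and let t be an element of the maximal ideal of R which does not lie in the nilradical. Then the localization R[1/t] of R away from t is a nonzero local ring; in fact it has a unique prime ideal. -/

import Mathlib

/-- Let `R` be a commutative local ring of Krull dimension at most `1` whose nilradical is a
prime ideal, and let `t` be an element of the maximal ideal of `R` not lying in the nilradical.
Then the localization `R[1/t]` of `R` away from `t` is a nonzero local ring; in fact it has a
unique prime ideal. -/
theorem localizationAway_isLocalRing_of_ringKrullDim_le_one
    {R : Type*} [CommRing R] [IsLocalRing R]
    (hdim : ringKrullDim R ≤ 1)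
    (hnil : (nilradical R).IsPrime)
    {t : R} (ht : t ∈ IsLocalRing.maximalIdeal R) (htnil : t ∉ nilradical R) :
    Nontrivial (Localization.Away t) ∧ IsLocalRing (Localization.Away t) ∧
      ∃! P : Ideal (Localization.Away t), P.IsPrime := by
  set M := Submonoid.powers t
  -- any prime of R disjoint from the powers of t equals the nilradical
  have key : ∀ p : Ideal R, p.IsPrime → Disjoint (M : Set R) (p : Set R) → p = nilradical R := by
    intro p hp hd
    have htp : t ∉ p := (Ideal.disjoint_powers_iff_notMem t hp.isRadical).mp hd
    have hle : nilradical R ≤ p := nilradical_le_prime p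
    by_contra hne
    have hlt : nilradical R < p := lt_of_le_of_ne hle (Ne.symm hne)
    have hlt2 : p < IsLocalRing.maximalIdeal R :=
      lt_of_le_of_ne (IsLocalRing.le_maximalIdeal hp.ne_top)
        (fun h => htp (h ▸ ht))
    let x0 : PrimeSpectrum R := ⟨nilradical R, hnil⟩
    let x1 : PrimeSpectrum R := ⟨p, hp⟩
    let x2 : PrimeSpectrum R := ⟨IsLocalRing.maximalIdeal R, inferInstance⟩
    have h01 : x0 < x1 := hlt
    have h12 : x1 < x2 := hlt2
    let c : LTSeries (PrimeSpectrum R) :=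
      (((RelSeries.singleton _ x0).snoc x1 h01).snoc x2 (by
        exact h12))
    have hlen : (c.length : WithBot (WithTop ℕ)) ≤ ringKrullDim R :=
      Order.LTSeries.length_le_krullDim c
    have : ((2 : ℕ) : WithBot (WithTop ℕ)) ≤ 1 := by
      refine le_trans ?_ hdim
      exact hlen
    norm_num at this
  have hdisj : Disjoint (M : Set R) (nilradical R : Set R) :=
    (Ideal.disjoint_powers_iff_notMem t hnil.isRadical).mpr htnil
  set P : Ideal (Localization.Away t) := Ideal.map (algebraMap R _) (nilradical R)
  have hP : P.IsPrime :=
    IsLocalization.isPrime_of_isPrime_disjoint M _ (nilradical R) hnil hdisj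
  have hnt : Nontrivial (Localization.Away t) := by
    refine ⟨0, 1, fun h => hP.ne_top (Ideal.eq_top_iff_one _ |>.mpr (h ▸ P.zero_mem))⟩
  have huniq : ∀ Q : Ideal (Localization.Away t), Q.IsPrime → Q = P := by
    intro Q hQ
    have h1 := (IsLocalization.isPrime_iff_isPrime_disjoint M (Localization.Away t) Q).mp hQ
    have h2 := key _ h1.1 h1.2
    have := IsLocalization.map_comap M (Localization.Away t) Q
    rw [← this, h2]
  refine ⟨hnt, ?_, P, hP, huniq⟩
  refine IsLocalRing.of_unique_max_ideal ?_
  obtain ⟨m, hm⟩ := Ideal.exists_maximal (Localization.Away t)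
  have : m = P := huniq m hm.isPrime
  exact ⟨P, this ▸ hm, fun I hI => huniq I hI.isPrime⟩
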